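/- Let d ≥ 1, a₁, …, a_d > 0, and set A = Σ_{i=1}^d a_i⁻¹. Define h(z) = A⁻¹ · exp(−(max_i z_i)(1 + A)) · Π_{i=1}^d a_i⁻¹ exp(z_i/a_i) for z ∈ ℝ^d with max_i z_i > 0, and h(z) = 0 otherwise. Then h is a probability density: ∫_{ℝ^d} h(z) dz = 1. -/

import Mathlib

open MeasureTheory Real Set Filter intervalIntegral
open scoped ENNReal NNReal


lemma aux_integrableOn_exp_div_Iic (a t : ℝ) (ha : 0 < a) :
    IntegrableOn (fun x => Real.exp (x / a)) (Set.Iic t) := by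
  refine integrableOn_Iic_of_intervalIntegral_norm_bounded (l := atBot) (a := fun y : ℝ => y)
    (a * Real.exp (t / a)) t (fun y => ?_) tendsto_id ?_
  · exact ((Real.continuous_exp.comp (continuous_id.div_const a)).integrableOn_Ioc)
  · filter_upwards [eventually_le_atBot t] with y hy
    have hne : a ≠ 0 := ha.ne'
    have : (∫ x in y..t, ‖Real.exp (x / a)‖) = ∫ x in y..t, Real.exp (x / a) := by
      simp [Real.norm_eq_abs, abs_of_pos (Real.exp_pos _)]
    rw [this, integral_comp_div (f := Real.exp) hne, integral_exp, smul_eq_mul]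
    nlinarith [Real.exp_pos (t / a), Real.exp_pos (y / a)]

lemma aux_int_Iic (a t : ℝ) (ha : 0 < a) :
    ∫ x in Set.Iic t, a⁻¹ * Real.exp (x / a) = Real.exp (t / a) := by
  have hderiv : ∀ x ∈ Set.Iic t,
      HasDerivAt (fun x => Real.exp (x / a)) (a⁻¹ * Real.exp (x / a)) x := by
    intro x _
    have h1 : HasDerivAt (fun x : ℝ => x / a) a⁻¹ x := by
      simpa [one_div] using (hasDerivAt_id x).div_const a
    simpa [mul_comm, Function.comp_def] using (Real.hasDerivAt_exp (x / a)).comp x h1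
  have hint : IntegrableOn (fun x => a⁻¹ * Real.exp (x / a)) (Set.Iic t) :=
    (aux_integrableOn_exp_div_Iic a t ha).const_mul _
  have htend : Tendsto (fun x => Real.exp (x / a)) atBot (nhds 0) := by
    apply Real.tendsto_exp_atBot.comp
    exact tendsto_id.atBot_div_const ha
  have := integral_Iic_of_hasDerivAt_of_tendsto' hderiv hint htend
  simpa using this

lemma aux_int_Ioi (c b : ℝ) (hc : 0 < c) :
    ∫ x in Set.Ioi b, c * Real.exp (-c * x) = Real.exp (-c * b) := by
  have hderiv : ∀ x ∈ Set.Ici b,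
      HasDerivAt (fun x => -Real.exp (-c * x)) (c * Real.exp (-c * x)) x := by
    intro x _
    have h1 : HasDerivAt (fun x : ℝ => -c * x) (-c) x := by
      simpa using (hasDerivAt_id x).const_mul (-c)
    have := ((Real.hasDerivAt_exp (-c * x)).comp x h1).neg
    simpa [mul_comm, Function.comp_def, Pi.neg_def] using this
  have hint : IntegrableOn (fun x => c * Real.exp (-c * x)) (Set.Ioi b) :=
    (exp_neg_integrableOn_Ioi b hc).const_mul _
  have htend : Tendsto (fun x => -Real.exp (-c * x)) atTop (nhds 0) := by
    rw [show (0:ℝ) = -0 by norm_num]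
    apply Tendsto.neg
    apply Real.tendsto_exp_atBot.comp
    have h2 : Tendsto (fun x : ℝ => c * x) atTop atTop := Tendsto.const_mul_atTop hc tendsto_id
    have h3 : Tendsto (fun x : ℝ => -c * x) atTop atBot := by
      simp only [neg_mul]
      exact tendsto_neg_atTop_atBot.comp h2
    exact h3
  have := integral_Ioi_of_hasDerivAt_of_tendsto' hderiv hint htend
  simpa using this

lemma aux_prod_integrable {d : ℕ} (a : Fin d → ℝ) (ha : ∀ i, 0 < a i) (t : ℝ) :
    Integrable (fun z : Fin d → ℝ =>
      ∏ i, (Set.Iic t).indicator (fun x => (a i)⁻¹ * Real.exp (x / a i)) (z i)) :=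
  Integrable.fintype_prod (𝕜 := ℝ) (fun i =>
    (integrable_indicator_iff measurableSet_Iic).mpr
      (((aux_integrableOn_exp_div_Iic (a i) t (ha i)).const_mul _)))

lemma aux_prod_integral {d : ℕ} (a : Fin d → ℝ) (ha : ∀ i, 0 < a i) (t : ℝ) :
    ∫ z : Fin d → ℝ, ∏ i, (Set.Iic t).indicator (fun x => (a i)⁻¹ * Real.exp (x / a i)) (z i)
      = Real.exp (t * ∑ i, (a i)⁻¹) := by
  rw [MeasureTheory.integral_fintype_prod_volume_eq_prod (𝕜 := ℝ)
    (f := fun i => (Set.Iic t).indicator (fun x => (a i)⁻¹ * Real.exp (x / a i)))]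
  have h1 : ∀ i : Fin d,
      (∫ x : ℝ, (Set.Iic t).indicator (fun x => (a i)⁻¹ * Real.exp (x / a i)) x)
        = Real.exp (t / a i) := by
    intro i
    rw [MeasureTheory.integral_indicator measurableSet_Iic]
    exact aux_int_Iic (a i) t (ha i)
  rw [Finset.prod_congr rfl fun i _ => h1 i, ← Real.exp_sum]
  congr 1
  rw [Finset.mul_sum]
  simp [div_eq_mul_inv]

lemma aux_mset {d : ℕ} (t : ℝ) : MeasurableSet {z : Fin d → ℝ | ∀ i, z i ≤ t} := by
  have : {z : Fin d → ℝ | ∀ i, z i ≤ t} = ⋂ i, {z | z i ≤ t} := by ext z; simp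
  rw [this]
  exact MeasurableSet.iInter fun i =>
    measurableSet_le (measurable_pi_apply i) measurable_const

lemma aux_F {d : ℕ} (a : Fin d → ℝ) (ha : ∀ i, 0 < a i) (t : ℝ) :
    ∫⁻ z : Fin d → ℝ in {z | ∀ i, z i ≤ t},
      ENNReal.ofReal (∏ i, (a i)⁻¹ * Real.exp (z i / a i))
      = ENNReal.ofReal (Real.exp (t * ∑ i, (a i)⁻¹)) := by
  set F := fun z : Fin d → ℝ =>
    ∏ i, (Set.Iic t).indicator (fun x => (a i)⁻¹ * Real.exp (x / a i)) (z i) with hF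
  have hFeq : ∀ z, ({z : Fin d → ℝ | ∀ i, z i ≤ t}).indicator
      (fun z => ENNReal.ofReal (∏ i, (a i)⁻¹ * Real.exp (z i / a i))) z
      = ENNReal.ofReal (F z) := by
    intro z
    by_cases hz : ∀ i, z i ≤ t
    · rw [Set.indicator_of_mem (show z ∈ {z : Fin d → ℝ | ∀ i, z i ≤ t} from hz)]
      congr 1
      exact Finset.prod_congr rfl fun i _ =>
        (Set.indicator_of_mem (Set.mem_Iic.mpr (hz i))
          (fun x => (a i)⁻¹ * Real.exp (x / a i))).symm
    · rw [Set.indicator_of_notMem (show z ∉ {z : Fin d → ℝ | ∀ i, z i ≤ t} from hz)]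
      push_neg at hz; obtain ⟨i, hi⟩ := hz
      have hzero : F z = 0 := Finset.prod_eq_zero (Finset.mem_univ i)
        (Set.indicator_of_notMem (by simpa using not_le.mpr hi)
          (fun x => (a i)⁻¹ * Real.exp (x / a i)))
      rw [hzero, ENNReal.ofReal_zero]
  have hFnn : 0 ≤ᵐ[volume] F := by
    filter_upwards with z
    exact Finset.prod_nonneg fun i _ => Set.indicator_nonneg
      (fun x _ => mul_nonneg (inv_nonneg.mpr (ha i).le) (Real.exp_pos _).le) _
  rw [← lintegral_indicator (aux_mset t), lintegral_congr hFeq,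
    ← ofReal_integral_eq_lintegral_ofReal (aux_prod_integrable a ha t) hFnn,
    aux_prod_integral a ha t]

section Core

variable {d : ℕ} [NeZero d]

noncomputable def Ms (z : Fin d → ℝ) : ℝ :=
  Finset.univ.sup' (Finset.univ_nonempty (α := Fin d)) z

lemma Ms_eq_iSup (z : Fin d → ℝ) : (⨆ i, z i) = Ms z :=
  (Finset.sup'_univ_eq_ciSup z).symm

lemma Ms_meas : Measurable (Ms (d := d)) := by
  have h : Ms (d := d) = Finset.univ.sup' (Finset.univ_nonempty (α := Fin d))
      (fun i => (fun z : Fin d → ℝ => z i)) := by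
    funext z
    rw [Ms, Finset.sup'_apply]
  rw [h]
  exact Finset.measurable_sup' _ (fun i _ => measurable_pi_apply i)

lemma Ms_le_iff (z : Fin d → ℝ) (t : ℝ) : Ms z ≤ t ↔ ∀ i, z i ≤ t := by
  rw [Ms]
  simp [Finset.sup'_le_iff]

lemma aux_core (a : Fin d → ℝ) (ha : ∀ i, 0 < a i) :
    ∫⁻ z : Fin d → ℝ in {z | 0 < Ms z},
      ENNReal.ofReal (Real.exp (-(Ms z) * (1 + ∑ i, (a i)⁻¹))
        * ∏ i, (a i)⁻¹ * Real.exp (z i / a i))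
      = ENNReal.ofReal (∑ i, (a i)⁻¹) := by
  set A := ∑ i, (a i)⁻¹ with hA
  have hApos : 0 < A := Finset.sum_pos (fun i _ => inv_pos.mpr (ha i)) Finset.univ_nonempty
  have h1A : (0:ℝ) < 1 + A := by linarith
  set g : (Fin d → ℝ) → ℝ := fun z => ∏ i, (a i)⁻¹ * Real.exp (z i / a i) with hg
  have hg_pos : ∀ z, 0 < g z := fun z =>
    Finset.prod_pos fun i _ => mul_pos (inv_pos.mpr (ha i)) (Real.exp_pos _)
  have hg_meas : Measurable g :=
    Finset.measurable_prod _ fun i _ =>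
      ((Real.measurable_exp.comp (by fun_prop : Measurable fun z : Fin d → ℝ => z i / a i)).const_mul _)
  -- the kernel
  set K : (Fin d → ℝ) → ℝ → ℝ≥0∞ := fun z s =>
    ENNReal.ofReal (g z) * (ENNReal.ofReal ((1 + A) * Real.exp (-(1 + A) * s)) *
      Set.indicator {p : (Fin d → ℝ) × ℝ | 0 < Ms p.1 ∧ Ms p.1 ≤ p.2}
        (fun _ => 1) (z, s)) with hK
  have hS : MeasurableSet {z : Fin d → ℝ | 0 < Ms z} :=
    measurableSet_lt measurable_const Ms_meas
  -- claim 1 : inner integral in s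
  have claim1 : ∀ z : Fin d → ℝ, (∫⁻ s in Set.Ioi (0:ℝ), K z s)
      = Set.indicator {z : Fin d → ℝ | 0 < Ms z}
        (fun z => ENNReal.ofReal (Real.exp (-(Ms z) * (1 + A)) * g z)) z := by
    intro z
    by_cases hz : 0 < Ms z
    · rw [Set.indicator_of_mem (show z ∈ {z : Fin d → ℝ | 0 < Ms z} from hz)]
      have hKz : ∀ s : ℝ, K z s = Set.indicator (Set.Ici (Ms z))
          (fun s => ENNReal.ofReal (g z) *
            ENNReal.ofReal ((1 + A) * Real.exp (-(1 + A) * s))) s := by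
        intro s
        by_cases hs : Ms z ≤ s
        · have hmem : (z, s) ∈ {p : (Fin d → ℝ) × ℝ | 0 < Ms p.1 ∧ Ms p.1 ≤ p.2} := ⟨hz, hs⟩
          rw [hK]
          simp only [Set.indicator_of_mem hmem, Set.indicator_of_mem (Set.mem_Ici.mpr hs)]
          ring
        · have hmem : (z, s) ∉ {p : (Fin d → ℝ) × ℝ | 0 < Ms p.1 ∧ Ms p.1 ≤ p.2} :=
            fun hc => hs hc.2
          rw [hK]
          simp only [Set.indicator_of_notMem hmem,
            Set.indicator_of_notMem (fun hc => hs (Set.mem_Ici.mp hc))]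
          ring
      have hIci : Set.Ici (Ms z) ∩ Set.Ioi (0:ℝ) = Set.Ici (Ms z) :=
        Set.inter_eq_self_of_subset_left (fun x hx => lt_of_lt_of_le hz hx)
      rw [lintegral_congr hKz, lintegral_indicator measurableSet_Ici,
        Measure.restrict_restrict measurableSet_Ici, hIci,
        lintegral_const_mul' _ _ ENNReal.ofReal_ne_top,
        setLIntegral_congr (Ioi_ae_eq_Ici (a := Ms z)).symm]
      have hIio : ∫⁻ s in Set.Ioi (Ms z),
          ENNReal.ofReal ((1 + A) * Real.exp (-(1 + A) * s))
          = ENNReal.ofReal (Real.exp (-(1 + A) * Ms z)) := by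
        rw [← ofReal_integral_eq_lintegral_ofReal
          ((exp_neg_integrableOn_Ioi _ h1A).const_mul _)
          (Filter.Eventually.of_forall fun s =>
            mul_nonneg h1A.le (Real.exp_pos _).le),
          aux_int_Ioi _ _ h1A]
      rw [hIio, ← ENNReal.ofReal_mul (hg_pos z).le]
      congr 1
      rw [mul_comm]
      congr 1
      ring_nf
    · rw [Set.indicator_of_notMem (show z ∉ {z : Fin d → ℝ | 0 < Ms z} from hz)]
      have : ∀ s : ℝ, K z s = 0 := by
        intro s
        have hmem : (z, s) ∉ {p : (Fin d → ℝ) × ℝ | 0 < Ms p.1 ∧ Ms p.1 ≤ p.2} :=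
          fun hc => hz hc.1
        rw [hK]
        simp [Set.indicator_of_notMem hmem]
      rw [lintegral_congr this]
      simp
  -- claim 2 : integral in z for fixed s > 0
  have claim2 : ∀ s : ℝ, 0 < s → (∫⁻ z : Fin d → ℝ, K z s)
      = ENNReal.ofReal ((1 + A) * Real.exp (-(1 + A) * s)) *
        ENNReal.ofReal (Real.exp (s * A) - 1) := by
    intro s hs
    set D : Set (Fin d → ℝ) := {z | 0 < Ms z ∧ Ms z ≤ s} with hD
    have hDmeas : MeasurableSet D := by
      have : D = {z | 0 < Ms z} ∩ {z | Ms z ≤ s} := rfl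
      rw [this]
      exact (measurableSet_lt measurable_const Ms_meas).inter
        (measurableSet_le Ms_meas measurable_const)
    have hKz : ∀ z : Fin d → ℝ, K z s
        = ENNReal.ofReal ((1 + A) * Real.exp (-(1 + A) * s)) *
          Set.indicator D (fun z => ENNReal.ofReal (g z)) z := by
      intro z
      by_cases hz : z ∈ D
      · have hmem : (z, s) ∈ {p : (Fin d → ℝ) × ℝ | 0 < Ms p.1 ∧ Ms p.1 ≤ p.2} := hz
        rw [hK]
        simp only [Set.indicator_of_mem hmem, Set.indicator_of_mem hz]
        ring
      · have hmem : (z, s) ∉ {p : (Fin d → ℝ) × ℝ | 0 < Ms p.1 ∧ Ms p.1 ≤ p.2} := hz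
        rw [hK]
        simp [Set.indicator_of_notMem hmem, Set.indicator_of_notMem hz]
    rw [lintegral_congr hKz, lintegral_const_mul' _ _ ENNReal.ofReal_ne_top,
      lintegral_indicator hDmeas]
    congr 1
    -- ∫⁻ z in D, ofReal (g z) = ofReal (exp (s*A) - 1)
    have hsplit : {z : Fin d → ℝ | ∀ i, z i ≤ s} = D ∪ {z | ∀ i, z i ≤ 0} := by
      ext z
      constructor
      · intro hzs
        have hzs' : Ms z ≤ s := (Ms_le_iff z s).mpr hzs
        rcases lt_or_ge 0 (Ms z) with h0 | h0
        · exact Or.inl ⟨h0, hzs'⟩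
        · exact Or.inr ((Ms_le_iff z 0).mp h0)
      · rintro (⟨_, h2⟩ | h0)
        · exact (Ms_le_iff z s).mp h2
        · intro i
          exact (h0 i).trans hs.le
    have hdisj : Disjoint D {z : Fin d → ℝ | ∀ i, z i ≤ 0} := by
      rw [Set.disjoint_left]
      rintro z ⟨h1, _⟩ h2
      exact absurd ((Ms_le_iff z 0).mpr h2) (not_le.mpr h1)
    have hsum := aux_F a ha s
    rw [hsplit, lintegral_union (aux_mset 0) hdisj, aux_F a ha 0] at hsum
    rw [zero_mul, Real.exp_zero] at hsum
    have hexp1 : (1:ℝ) ≤ Real.exp (s * A) := by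
      rw [show (1:ℝ) = Real.exp 0 from (Real.exp_zero).symm]
      exact Real.exp_le_exp.mpr (mul_nonneg hs.le hApos.le)
    have key : ENNReal.ofReal (Real.exp (s * A))
        = ENNReal.ofReal (Real.exp (s * A) - 1) + ENNReal.ofReal 1 := by
      rw [← ENNReal.ofReal_add (by linarith) zero_le_one]
      norm_num
    rw [key] at hsum
    exact (ENNReal.add_left_inj ENNReal.ofReal_ne_top).mp hsum
  -- claim 3 : final one-dimensional integral
  have claim3 : (∫⁻ s in Set.Ioi (0:ℝ),
      ENNReal.ofReal ((1 + A) * Real.exp (-(1 + A) * s)) *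
        ENNReal.ofReal (Real.exp (s * A) - 1)) = ENNReal.ofReal A := by
    have hcomb : ∀ s : ℝ,
        ENNReal.ofReal ((1 + A) * Real.exp (-(1 + A) * s)) *
          ENNReal.ofReal (Real.exp (s * A) - 1)
        = ENNReal.ofReal (((1 + A) * Real.exp (-(1 + A) * s)) * (Real.exp (s * A) - 1)) := by
      intro s
      rw [ENNReal.ofReal_mul (mul_nonneg h1A.le (Real.exp_pos _).le)]
    have hfun : ∀ s : ℝ,
        ((1 + A) * Real.exp (-(1 + A) * s)) * (Real.exp (s * A) - 1)
        = (1 + A) * Real.exp (-1 * s) - (1 + A) * Real.exp (-(1 + A) * s) := by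
      intro s
      rw [mul_sub, mul_one, mul_assoc, ← Real.exp_add]
      congr 2
      ring
    have hint1 : IntegrableOn (fun s : ℝ => (1 + A) * Real.exp (-1 * s)) (Set.Ioi (0:ℝ)) :=
      (exp_neg_integrableOn_Ioi 0 one_pos).const_mul _
    have hint2 : IntegrableOn (fun s : ℝ => (1 + A) * Real.exp (-(1 + A) * s)) (Set.Ioi (0:ℝ)) :=
      (exp_neg_integrableOn_Ioi 0 h1A).const_mul _
    have hint : IntegrableOn
        (fun s : ℝ => ((1 + A) * Real.exp (-(1 + A) * s)) * (Real.exp (s * A) - 1))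
        (Set.Ioi (0:ℝ)) := by
      exact (hint1.sub hint2).congr
        (Filter.Eventually.of_forall fun s => (hfun s).symm)
    have hnn : 0 ≤ᵐ[volume.restrict (Set.Ioi (0:ℝ))]
        (fun s : ℝ => ((1 + A) * Real.exp (-(1 + A) * s)) * (Real.exp (s * A) - 1)) := by
      rw [EventuallyLE, ae_restrict_iff' measurableSet_Ioi]
      apply Filter.Eventually.of_forall
      intro s hs
      have hexp1 : (1:ℝ) ≤ Real.exp (s * A) := by
        rw [show (1:ℝ) = Real.exp 0 from (Real.exp_zero).symm]
        exact Real.exp_le_exp.mpr (mul_nonneg hs.le hApos.le)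
      have : (0:ℝ) < (1 + A) * Real.exp (-(1 + A) * s) :=
        mul_pos h1A (Real.exp_pos _)
      exact mul_nonneg this.le (by linarith)
    calc (∫⁻ s in Set.Ioi (0:ℝ),
        ENNReal.ofReal ((1 + A) * Real.exp (-(1 + A) * s)) *
          ENNReal.ofReal (Real.exp (s * A) - 1))
        = ∫⁻ s in Set.Ioi (0:ℝ),
          ENNReal.ofReal (((1 + A) * Real.exp (-(1 + A) * s)) * (Real.exp (s * A) - 1)) := by
          exact lintegral_congr fun s => hcomb s
      _ = ENNReal.ofReal (∫ s in Set.Ioi (0:ℝ),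
          ((1 + A) * Real.exp (-(1 + A) * s)) * (Real.exp (s * A) - 1)) :=
          (ofReal_integral_eq_lintegral_ofReal hint hnn).symm
      _ = ENNReal.ofReal A := by
          congr 1
          rw [setIntegral_congr_fun measurableSet_Ioi (fun s _ => hfun s),
            integral_sub hint1 hint2, MeasureTheory.integral_const_mul _ _]
          have e1 : ∫ s in Set.Ioi (0:ℝ), Real.exp (-1 * s) = 1 := by
            have := aux_int_Ioi 1 0 one_pos
            simpa using this
          have e2 : ∫ s in Set.Ioi (0:ℝ), (1 + A) * Real.exp (-(1 + A) * s) = 1 := by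
            have := aux_int_Ioi (1 + A) 0 h1A
            simpa using this
          rw [e1, e2]
          ring
  -- measurability of the kernel
  have hKmeas : Measurable (Function.uncurry K) := by
    have hset : MeasurableSet {p : (Fin d → ℝ) × ℝ | 0 < Ms p.1 ∧ Ms p.1 ≤ p.2} := by
      have : {p : (Fin d → ℝ) × ℝ | 0 < Ms p.1 ∧ Ms p.1 ≤ p.2}
          = {p : (Fin d → ℝ) × ℝ | 0 < Ms p.1} ∩ {p | Ms p.1 ≤ p.2} := rfl
      rw [this]
      exact (measurableSet_lt measurable_const (Ms_meas.comp measurable_fst)).inter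
        (measurableSet_le (Ms_meas.comp measurable_fst) measurable_snd)
    apply Measurable.mul
    · exact (hg_meas.comp measurable_fst).ennreal_ofReal
    · apply Measurable.mul
      · exact ((Real.measurable_exp.comp (measurable_snd.const_mul _)).const_mul
          _).ennreal_ofReal
      · exact Measurable.indicator measurable_const hset
  -- main chain
  calc ∫⁻ z : Fin d → ℝ in {z | 0 < Ms z},
        ENNReal.ofReal (Real.exp (-(Ms z) * (1 + A)) * g z)
      = ∫⁻ z : Fin d → ℝ, Set.indicator {z : Fin d → ℝ | 0 < Ms z}
          (fun z => ENNReal.ofReal (Real.exp (-(Ms z) * (1 + A)) * g z)) z := by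
        rw [lintegral_indicator hS]
    _ = ∫⁻ z : Fin d → ℝ, ∫⁻ s in Set.Ioi (0:ℝ), K z s := by
        exact lintegral_congr fun z => (claim1 z).symm
    _ = ∫⁻ s in Set.Ioi (0:ℝ), ∫⁻ z : Fin d → ℝ, K z s :=
        lintegral_lintegral_swap hKmeas.aemeasurable
    _ = ∫⁻ s in Set.Ioi (0:ℝ),
        ENNReal.ofReal ((1 + A) * Real.exp (-(1 + A) * s)) *
          ENNReal.ofReal (Real.exp (s * A) - 1) := by
        apply setLIntegral_congr_fun measurableSet_Ioi
        intro s hs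
        exact claim2 s hs
    _ = ENNReal.ofReal A := claim3

end Core

/-- The standardized multivariate generalized Pareto density in the
U-representation with independent reverse exponential generator, i.e.
`h(z) = A⁻¹ exp(-(maxᵢ zᵢ)(1 + A)) Πᵢ aᵢ⁻¹ exp(zᵢ/aᵢ)` for `maxᵢ zᵢ > 0` (with
`A = Σᵢ aᵢ⁻¹`) and `h(z) = 0` otherwise, is a probability density: `∫ h = 1`. -/
theorem mgpd_U_density_integral_one
    {d : ℕ} [NeZero d] (a : Fin d → ℝ) (ha : ∀ i, 0 < a i)
    (h : (Fin d → ℝ) → ℝ)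
    (hh : ∀ z, h z = Set.indicator {z : Fin d → ℝ | 0 < ⨆ i, z i}
      (fun z => (∑ i, (a i)⁻¹)⁻¹ *
        Real.exp (-(⨆ i, z i) * (1 + ∑ i, (a i)⁻¹)) *
        ∏ i, (a i)⁻¹ * Real.exp (z i / a i)) z) :
    ∫ z, h z = 1 := by
  have hApos : 0 < ∑ i, (a i)⁻¹ :=
    Finset.sum_pos (fun i _ => inv_pos.mpr (ha i)) Finset.univ_nonempty
  have hS : MeasurableSet {z : Fin d → ℝ | 0 < Ms z} :=
    measurableSet_lt measurable_const Ms_meas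
  have hh' : ∀ z, h z = Set.indicator {z : Fin d → ℝ | 0 < Ms z}
      (fun z => (∑ i, (a i)⁻¹)⁻¹ *
        Real.exp (-(Ms z) * (1 + ∑ i, (a i)⁻¹)) *
        ∏ i, (a i)⁻¹ * Real.exp (z i / a i)) z := by
    intro z
    rw [hh z]
    simp only [Ms_eq_iSup]
  have hg_meas : Measurable (fun z : Fin d → ℝ => ∏ i, (a i)⁻¹ * Real.exp (z i / a i)) :=
    Finset.measurable_prod _ fun i _ =>
      ((Real.measurable_exp.comp (by fun_prop : Measurable fun z : Fin d → ℝ => z i / a i)).const_mul _)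
  have hf_meas : Measurable (fun z : Fin d → ℝ => (∑ i, (a i)⁻¹)⁻¹ *
      Real.exp (-(Ms z) * (1 + ∑ i, (a i)⁻¹)) *
      ∏ i, (a i)⁻¹ * Real.exp (z i / a i)) := by
    apply Measurable.mul _ hg_meas
    exact (Real.measurable_exp.comp (Ms_meas.neg.mul_const _)).const_mul _
  have hmeas : AEStronglyMeasurable h volume := by
    have hfun : h = Set.indicator {z : Fin d → ℝ | 0 < Ms z}
        (fun z => (∑ i, (a i)⁻¹)⁻¹ *
          Real.exp (-(Ms z) * (1 + ∑ i, (a i)⁻¹)) *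
          ∏ i, (a i)⁻¹ * Real.exp (z i / a i)) := funext hh'
    rw [hfun]
    exact (hf_meas.indicator hS).aestronglyMeasurable
  have hnn : 0 ≤ᵐ[(volume : Measure (Fin d → ℝ))] h := by
    apply Filter.Eventually.of_forall
    intro z
    rw [hh' z]
    apply Set.indicator_nonneg
    intro w _
    have h1 : (0:ℝ) ≤ (∑ i, (a i)⁻¹)⁻¹ := inv_nonneg.mpr hApos.le
    have h2 : (0:ℝ) ≤ ∏ i, (a i)⁻¹ * Real.exp (w i / a i) :=
      Finset.prod_nonneg fun i _ =>
        mul_nonneg (inv_nonneg.mpr (ha i).le) (Real.exp_pos _).le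
    have h3 : (0:ℝ) < Real.exp (-(Ms w) * (1 + ∑ i, (a i)⁻¹)) := Real.exp_pos _
    positivity
  rw [integral_eq_lintegral_of_nonneg_ae hnn hmeas]
  have hkey : ∫⁻ z : Fin d → ℝ, ENNReal.ofReal (h z) = 1 := by
    have hlin : ∀ z : Fin d → ℝ, ENNReal.ofReal (h z)
        = ENNReal.ofReal ((∑ i, (a i)⁻¹)⁻¹) *
          Set.indicator {z : Fin d → ℝ | 0 < Ms z}
            (fun z => ENNReal.ofReal (Real.exp (-(Ms z) * (1 + ∑ i, (a i)⁻¹)) *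
              ∏ i, (a i)⁻¹ * Real.exp (z i / a i))) z := by
      intro z
      rw [hh' z]
      by_cases hz : z ∈ {z : Fin d → ℝ | 0 < Ms z}
      · rw [Set.indicator_of_mem hz, Set.indicator_of_mem hz,
          mul_assoc, ENNReal.ofReal_mul (inv_nonneg.mpr hApos.le)]
      · rw [Set.indicator_of_notMem hz, Set.indicator_of_notMem hz,
          mul_zero, ENNReal.ofReal_zero]
    rw [lintegral_congr hlin, lintegral_const_mul' _ _ ENNReal.ofReal_ne_top,
      lintegral_indicator hS, aux_core a ha,
      ← ENNReal.ofReal_mul (inv_nonneg.mpr hApos.le),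
      inv_mul_cancel₀ hApos.ne', ENNReal.ofReal_one]
  rw [hkey]
  simp
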